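/- Let F be a field and V a finite-dimensional F-vector space. There is a canonical isomorphism Λ^{*,d}(V^*) ≅ (Λ^{!,d}(V))^*, where Λ^{!,d}(V) = ∩_{i=1}^{d−1} V^{⊗(i−1)} ⊗ Λ^{!,2}(V) ⊗ V^{⊗(d−1−i)} and Λ^{*,d}(V^*) is the quotient of (V^*)^{⊗d} by the sum of the subspaces (V^*)^{⊗(i−1)} ⊗ Sym^{!,2}(V^*) ⊗ (V^*)^{⊗(d−1−i)}. -/
import Mathlib


open scoped TensorProduct
open LinearMap

variable (F : Type) [Field F] (V : Type) [AddCommGroup V] [Module F V]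

/-- The action of a permutation σ ∈ Σ_d on the d-th tensor power V^{⊗d}. -/
noncomputable def permMap (d : ℕ) (σ : Equiv.Perm (Fin d)) :
    (⨂[F] _ : Fin d, V) →ₗ[F] ⨂[F] _ : Fin d, V :=
  (PiTensorProduct.reindex F (fun _ : Fin d => V) σ).toLinearMap

/-- The adjacent transposition (i, i+1) in Σ_d. -/
def swapAdj (d : ℕ) (i : Fin (d - 1)) : Equiv.Perm (Fin d) :=
  Equiv.swap ⟨i.1, by have := i.2; omega⟩ ⟨i.1 + 1, by have := i.2; omega⟩

/-- The subspace V^{⊗(i-1)} ⊗ Sym^{!,2}(V) ⊗ V^{⊗(d-1-i)} of V^{⊗d}, realized as the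
fixed subspace of the transposition (i,i+1) acting on V^{⊗d}. -/
noncomputable def symTwoPart (d : ℕ) (i : Fin (d - 1)) :
    Submodule F (⨂[F] _ : Fin d, V) :=
  LinearMap.eqLocus (permMap F V d (swapAdj d i)) LinearMap.id

/-- The subspace V^{⊗(i-1)} ⊗ Λ^{!,2}(V) ⊗ V^{⊗(d-1-i)} of V^{⊗d}, realized as the image
of (id - (i,i+1)) acting on V^{⊗d}; here Λ^{!,2}(V) = span{v⊗w - w⊗v} = range(id - flip). -/
noncomputable def lamTwoPart (d : ℕ) (i : Fin (d - 1)) :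
    Submodule F (⨂[F] _ : Fin d, V) :=
  LinearMap.range (LinearMap.id - permMap F V d (swapAdj d i))

/-- Λ^{!,d}(V) = ∩_{i=1}^{d-1} V^{⊗(i-1)} ⊗ Λ^{!,2}(V) ⊗ V^{⊗(d-1-i)}. -/
noncomputable def lamShriek (d : ℕ) : Submodule F (⨂[F] _ : Fin d, V) :=
  ⨅ i : Fin (d - 1), lamTwoPart F V d i

/-- Sym^{!,d}(V): the Σ_d-invariants of V^{⊗d}. -/
noncomputable def symShriek (d : ℕ) : Submodule F (⨂[F] _ : Fin d, V) :=
  ⨅ σ : Equiv.Perm (Fin d), LinearMap.eqLocus (permMap F V d σ) LinearMap.id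

/-- The subspace of V^{⊗d} spanned by all t - σ(t). -/
noncomputable def symRel (d : ℕ) : Submodule F (⨂[F] _ : Fin d, V) :=
  ⨆ σ : Equiv.Perm (Fin d), LinearMap.range (LinearMap.id - permMap F V d σ)

/-- Sym^{*,d}(V): the Σ_d-coinvariants of V^{⊗d}. -/
noncomputable abbrev symStar (d : ℕ) :=
  (⨂[F] _ : Fin d, V) ⧸ symRel F V d

/-- The sum of the subspaces V^{⊗(i-1)} ⊗ Sym^{!,2}(V) ⊗ V^{⊗(d-1-i)} of V^{⊗d}. -/
noncomputable def lamRel (d : ℕ) : Submodule F (⨂[F] _ : Fin d, V) :=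
  ⨆ i : Fin (d - 1), symTwoPart F V d i

/-- Λ^{*,d}(V): the quotient of V^{⊗d} by the sum of the subspaces
V^{⊗(i-1)} ⊗ Sym^{!,2}(V) ⊗ V^{⊗(d-1-i)}. -/
noncomputable abbrev lamStar (d : ℕ) :=
  (⨂[F] _ : Fin d, V) ⧸ lamRel F V d

section AuxPairing

open PiTensorProduct

variable {F V}
variable (W : Type) [AddCommGroup W] [Module F W]

/-- Split off the last tensor factor. -/
noncomputable def splitEquivAux (d : ℕ) :
    (⨂[F] _ : Fin (d + 1), W) ≃ₗ[F] (⨂[F] _ : Fin d, W) ⊗[F] W :=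
  (PiTensorProduct.reindex F (fun _ : Fin (d + 1) => W) finSumFinEquiv.symm).trans
    ((PiTensorProduct.tmulEquiv F W).symm.trans
      (TensorProduct.congr (LinearEquiv.refl F _)
        (PiTensorProduct.subsingletonEquiv (0 : Fin 1))))

lemma splitEquivAux_tprod (d : ℕ) (f : Fin (d + 1) → W) :
    splitEquivAux W d (tprod F f)
      = (tprod F fun i : Fin d => f i.castSucc) ⊗ₜ[F] f (Fin.last d) := by
  simp only [splitEquivAux, LinearEquiv.trans_apply, reindex_tprod, Equiv.symm_symm]
  have h1 : (tprod F (s := fun _ : Fin d ⊕ Fin 1 => W) fun i => f (finSumFinEquiv i))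
      = tprod F fun i => Sum.elim (fun i : Fin d => f i.castSucc)
          (fun _ : Fin 1 => f (Fin.last d)) i := by
    congr 1
    funext i
    cases i with
    | inl i => simp [Fin.castSucc, Fin.castAdd]
    | inr i =>
      have : i = 0 := Subsingleton.elim _ _
      subst this
      simp [finSumFinEquiv, Fin.natAdd, Fin.last]
  rw [h1, PiTensorProduct.tmulEquiv_symm_apply]
  simp [TensorProduct.congr]

/-- Functionals on a tensor power agree if they agree on pure tensors. -/
lemma dual_tprod_ext {d : ℕ} {φ ψ : Module.Dual F (⨂[F] _ : Fin d, W)}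
    (h : ∀ v : Fin d → W, φ (tprod F v) = ψ (tprod F v)) : φ = ψ := by
  apply PiTensorProduct.ext
  ext v
  exact h v

variable (F V)

/-- The pairing package: finiteness of the tensor power together with the
duality equivalence computing on pure tensors. -/
theorem pairing_package [FiniteDimensional F V] (d : ℕ) :
    Module.Finite F (⨂[F] _ : Fin d, V) ∧
      ∃ e : (⨂[F] _ : Fin d, Module.Dual F V) ≃ₗ[F] Module.Dual F (⨂[F] _ : Fin d, V),
        ∀ (f : Fin d → Module.Dual F V) (v : Fin d → V),
          e (tprod F f) (tprod F v) = ∏ i, f i (v i) := by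
  induction d with
  | zero =>
    constructor
    · exact Module.Finite.equiv (PiTensorProduct.isEmptyEquiv (Fin 0)).symm
    · refine ⟨(PiTensorProduct.isEmptyEquiv (Fin 0)).trans
        (((LinearMap.ringLmapEquivSelf F F F).symm.trans
          (LinearEquiv.refl F (Module.Dual F F))).trans
          (PiTensorProduct.isEmptyEquiv (Fin 0) :
            (⨂[F] _ : Fin 0, V) ≃ₗ[F] F).dualMap), ?_⟩
      intro f v
      simp [PiTensorProduct.isEmptyEquiv_apply_tprod, LinearMap.ringLmapEquivSelf]
  | succ d ih =>
    obtain ⟨hfin, e, he⟩ := ih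
    haveI := hfin
    constructor
    · exact Module.Finite.equiv (splitEquivAux V d).symm
    · refine ⟨(splitEquivAux (Module.Dual F V) d).trans
        ((TensorProduct.congr e (LinearEquiv.refl F (Module.Dual F V))).trans
          ((TensorProduct.dualDistribEquiv F (⨂[F] _ : Fin d, V) V).trans
            (splitEquivAux V d).dualMap)), ?_⟩
      intro f v
      simp only [LinearEquiv.trans_apply, splitEquivAux_tprod, TensorProduct.congr_tmul,
        LinearEquiv.refl_apply, LinearEquiv.dualMap_apply, TensorProduct.dualDistribEquiv,
        TensorProduct.dualDistribEquivOfBasis, LinearEquiv.ofLinear_apply]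
      rw [TensorProduct.dualDistrib_apply, he]
      rw [Fin.prod_univ_castSucc]

variable {F V} in
/-- The pairing equivalence intertwines the permutation actions. -/
lemma pairing_intertwine {d : ℕ}
    (e : (⨂[F] _ : Fin d, Module.Dual F V) ≃ₗ[F] Module.Dual F (⨂[F] _ : Fin d, V))
    (he : ∀ (f : Fin d → Module.Dual F V) (v : Fin d → V),
      e (tprod F f) (tprod F v) = ∏ i, f i (v i))
    (σ : Equiv.Perm (Fin d)) :
    e.toLinearMap ∘ₗ permMap F (Module.Dual F V) d σ
      = (permMap F V d σ⁻¹).dualMap ∘ₗ e.toLinearMap := by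
  apply PiTensorProduct.ext
  ext f v
  simp only [LinearMap.compMultilinearMap_apply, LinearMap.comp_apply,
    LinearEquiv.coe_coe, LinearMap.dualMap_apply, permMap,
    PiTensorProduct.reindex_tprod]
  rw [he, he]
  simp only [Equiv.Perm.inv_def, Equiv.symm_symm]
  rw [← Equiv.prod_comp σ (fun i => (f (Equiv.symm σ i)) (v i))]
  exact Finset.prod_congr rfl fun i _ => by rw [Equiv.symm_apply_apply]

end AuxPairing

variable {F V} in
/-- Under the pairing equivalence, the fixed subspace of a swap on the dual side maps onto
the annihilator of the image of (id - swap) on the primal side. -/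
lemma map_symTwoPart {d : ℕ}
    (e : (⨂[F] _ : Fin d, Module.Dual F V) ≃ₗ[F] Module.Dual F (⨂[F] _ : Fin d, V))
    (he : ∀ (f : Fin d → Module.Dual F V) (v : Fin d → V),
      e (PiTensorProduct.tprod F f) (PiTensorProduct.tprod F v) = ∏ i, f i (v i))
    (i : Fin (d - 1)) :
    Submodule.map (e : _ →ₗ[F] _) (symTwoPart F (Module.Dual F V) d i)
      = (lamTwoPart F V d i).dualAnnihilator := by
  set σ := swapAdj d i with hσdef
  have hσ : σ⁻¹ = σ := Equiv.swap_inv _ _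
  have key : ∀ y, e (permMap F (Module.Dual F V) d σ y)
      = (permMap F V d σ).dualMap (e y) := by
    intro y
    have h := pairing_intertwine e he σ
    rw [hσ] at h
    simpa using LinearMap.congr_fun h y
  ext x
  rw [Submodule.mem_map_equiv]
  simp only [symTwoPart, LinearMap.mem_eqLocus, LinearMap.id_coe, id_eq]
  rw [lamTwoPart, ← LinearMap.ker_dualMap_eq_dualAnnihilator_range, LinearMap.mem_ker]
  have hdual : (LinearMap.id - permMap F V d σ).dualMap x
      = x - (permMap F V d σ).dualMap x := by
    ext m
    simp [LinearMap.dualMap_apply, LinearMap.sub_apply, map_sub]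
  rw [hdual, sub_eq_zero]
  constructor
  · intro h
    have h' := congrArg e h
    rw [key, e.apply_symm_apply] at h'
    exact h'.symm
  · intro h
    apply e.injective
    rw [key, e.apply_symm_apply]
    exact h.symm

/-- For finite-dimensional V, there is a canonical isomorphism
Λ^{*,d}(V^*) ≅ (Λ^{!,d}(V))^*. -/
theorem lamStar_dual_iso [FiniteDimensional F V] (d : ℕ) :
    Nonempty (lamStar F (Module.Dual F V) d ≃ₗ[F] Module.Dual F (lamShriek F V d)) := by
  obtain ⟨hfin, e, he⟩ := pairing_package F V d
  have hmap : Submodule.map (e : _ →ₗ[F] _) (lamRel F (Module.Dual F V) d)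
      = (lamShriek F V d).dualAnnihilator := by
    rw [lamRel, Submodule.map_iSup, lamShriek, Subspace.dualAnnihilator_iInf_eq]
    exact iSup_congr fun i => map_symTwoPart e he i
  exact ⟨(Submodule.Quotient.equiv _ _ e hmap).trans
    (Subspace.quotAnnihilatorEquiv (lamShriek F V d))⟩
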